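/- Consider the remote insulin action dynamics Ẋ(t) = −P₂·X(t) + P₃·I(t) on t ≥ 0 with P₂ ∈ [P̲₂, P̄₂] and P₃ ∈ [P̲₃, P̄₃] for positive bounds. Let X̂, Î be differentiable estimate signals with |X(t) − X̂(t)| ≤ Δ_X, |I(t) − Î(t)| ≤ Δ_I, and |Ẋ(t) − d/dt X̂(t)| ≤ Δ̇_X for all t. Let X_ref be a differentiable reference with 0 ≤ X_ref(t) ≤ κ₁ and |Ẋ_ref(t)| ≤ M_X for all t, let ρ_X(t) = (p_X − q_X)e^{−μ_X t} + q_X be the funnel with 0 < q_X < p_X and μ_X > 0, define the normalized error e_X(t) = (X_ref(t) − X̂(t))/ρ_X(t), and let I_ref(t) = κ₂·Ψ(e_X(t)). Suppose the plasma-insulin funnel invariance from Stage I holds, i.e., |I_ref(t) − Î(t)| < ρ_I(t) ≤ p_I for all t ≥ 0, suppose |e_X(0)| < 1, κ₂ − p_I − Δ_I ≥ 0, κ₁ − q_X + Δ_X ≥ 0, q_X − Δ_X ≥ 0, and suppose the feasibility conditions hold: (FC2a) P̲₃(κ₂ − p_I − Δ_I) − P̄₂(κ₁ − q_X + Δ_X)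 > M_X + μ_X(p_X − q_X) + Δ̇_X; (FC2b) P̲₂(q_X − Δ_X) − P̄₃(p_I + Δ_I) > M_X + μ_X(p_X − q_X) + Δ̇_X. Then |X_ref(t) − X̂(t)| < ρ_X(t) for all t ≥ 0. -/

import Mathlib

open Filter Set Topology

lemma exit_contra {g : ℝ → ℝ} {g' T : ℝ} (hd : HasDerivAt g g' T)
    (hg' : g' < 0) (hgT : g T = 0) (hT : 0 < T)
    (hlt : ∀ s, 0 ≤ s → s < T → g s < 0) : False := by
  have h1 : Tendsto (slope g T) (𝓝[<] T) (𝓝 g') :=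
    (hasDerivAt_iff_tendsto_slope.mp hd).mono_left
      (nhdsWithin_mono T fun x hx => ne_of_lt hx)
  have h2 : ∀ᶠ s in 𝓝[<] T, slope g T s < 0 := h1.eventually_lt_const hg'
  have h3 : ∀ᶠ s in 𝓝[<] T, s ∈ Set.Ioo 0 T :=
    eventually_of_mem (Ioo_mem_nhdsLT_of_mem ⟨hT, le_refl T⟩) (fun x hx => hx)
  obtain ⟨s, hs1, hs2⟩ := (h2.and h3).exists
  rw [slope_def_field, hgT, sub_zero] at hs1
  have hsT : s - T < 0 := sub_neg.mpr hs2.2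
  rcases div_neg_iff.mp hs1 with ⟨h, _⟩ | ⟨_, h⟩
  · exact absurd h (not_lt.mpr (hlt s hs2.1.le hs2.2).le)
  · linarith



/-- **Stage II of the proof of Theorem 1: invariance of the
remote-insulin-action funnel.** For the dynamics `Ẋ = −P₂X + P₃I` with the
reference `I_ref(t) = κ₂·Ψ(e_X(t))`, bounded estimation errors, the Stage I
plasma-insulin funnel invariance, and the feasibility conditions FC2a–FC2b,
the tracking error `X_ref − X̂` stays strictly inside the funnel `ρ_X` for all
`t ≥ 0`. -/
theorem stageII_remote_insulin_funnel_invariance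
    -- the bounded transformation function Ψ
    (Ψ : ℝ → ℝ)
    (hΨC1 : ContDiff ℝ 1 Ψ)
    (hΨmono : Monotone Ψ)
    (hΨ0 : ∀ s ≤ (0 : ℝ), Ψ s = 0)
    (hΨ1 : ∀ s ≥ (1 : ℝ), Ψ s = 1)
    (hΨrange : ∀ s, 0 ≤ Ψ s ∧ Ψ s ≤ 1)
    -- parameters
    (P2 P2low P2bar P3 P3low P3bar κ₁ κ₂ Δ_X Δ_I Δ'_X M_X : ℝ)
    (hP2low : 0 < P2low) (hP2 : P2low ≤ P2 ∧ P2 ≤ P2bar)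
    (hP3low : 0 < P3low) (hP3 : P3low ≤ P3 ∧ P3 ≤ P3bar)
    (hκ₁ : 0 < κ₁) (hκ₂ : 0 < κ₂)
    (hΔX : 0 < Δ_X) (hΔI : 0 < Δ_I) (hΔ'X : 0 < Δ'_X) (hMX : 0 < M_X)
    -- funnel parameters
    (p_X q_X μ_X p_I q_I μ_I : ℝ)
    (hqX : 0 < q_X) (hpX : q_X < p_X) (hμX : 0 < μ_X)
    (hqI : 0 < q_I) (hpI : q_I < p_I) (hμI : 0 < μ_I)
    -- signals and definitions
    (X I Xhat Ihat Xhat' Xref Xref' : ℝ → ℝ)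
    (ρX : ℝ → ℝ) (hρXdef : ∀ t, ρX t = (p_X - q_X) * Real.exp (-μ_X * t) + q_X)
    (eX : ℝ → ℝ) (heX : ∀ t, eX t = (Xref t - Xhat t) / ρX t)
    (Iref : ℝ → ℝ) (hIrefdef : ∀ t, Iref t = κ₂ * Ψ (eX t))
    (ρI : ℝ → ℝ) (hρIdef : ∀ t, ρI t = (p_I - q_I) * Real.exp (-μ_I * t) + q_I)
    -- remote insulin action dynamics on t ≥ 0
    (hdynX : ∀ t ≥ (0 : ℝ), HasDerivAt X (-(P2 * X t) + P3 * I t) t)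
    -- estimates: differentiable with bounded position/derivative errors
    (hXhat : ∀ t ≥ (0 : ℝ), HasDerivAt Xhat (Xhat' t) t)
    (hXerr : ∀ t ≥ (0 : ℝ), |X t - Xhat t| ≤ Δ_X)
    (hIerr : ∀ t ≥ (0 : ℝ), |I t - Ihat t| ≤ Δ_I)
    (hXerr' : ∀ t ≥ (0 : ℝ), |(-(P2 * X t) + P3 * I t) - Xhat' t| ≤ Δ'_X)
    -- reference: differentiable, bounded, with bounded derivative
    (hXrefrange : ∀ t ≥ (0 : ℝ), 0 ≤ Xref t ∧ Xref t ≤ κ₁)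
    (hXref' : ∀ t ≥ (0 : ℝ), HasDerivAt Xref (Xref' t) t)
    (hXrefbnd : ∀ t ≥ (0 : ℝ), |Xref' t| ≤ M_X)
    -- Stage I funnel invariance: |I_ref − Î| < ρ_I ≤ p_I on t ≥ 0
    (hStageI : ∀ t ≥ (0 : ℝ), |Iref t - Ihat t| < ρI t ∧ ρI t ≤ p_I)
    -- initial condition and sign conditions
    (hinitX : |eX 0| < 1)
    (h1 : 0 ≤ κ₂ - p_I - Δ_I) (h2 : 0 ≤ κ₁ - q_X + Δ_X) (h3 : 0 ≤ q_X - Δ_X)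
    -- feasibility conditions
    (hFC2a : P3low * (κ₂ - p_I - Δ_I) - P2bar * (κ₁ - q_X + Δ_X)
        > M_X + μ_X * (p_X - q_X) + Δ'_X)
    (hFC2b : P2low * (q_X - Δ_X) - P3bar * (p_I + Δ_I)
        > M_X + μ_X * (p_X - q_X) + Δ'_X) :
    ∀ t ≥ (0 : ℝ), |Xref t - Xhat t| < ρX t := by
  -- derivative and basic properties of the funnel ρX
  have hμpq : 0 < μ_X * (p_X - q_X) := by nlinarith
  have hρderiv : ∀ t : ℝ, HasDerivAt ρX (-(μ_X * (p_X - q_X) * Real.exp (-μ_X * t))) t := by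
    intro t
    have h : HasDerivAt (fun s => (p_X - q_X) * Real.exp (-μ_X * s) + q_X)
        (-(μ_X * (p_X - q_X) * Real.exp (-μ_X * t))) t := by
      have h0 := ((((hasDerivAt_id t).const_mul (-μ_X)).exp).const_mul (p_X - q_X)).add_const q_X
      refine h0.congr_deriv ?_
      simp only [id_eq]
      ring
    exact h.congr_of_eventuallyEq (Filter.Eventually.of_forall hρXdef)
  have hρgt : ∀ t : ℝ, q_X < ρX t := by
    intro t; rw [hρXdef]; nlinarith [Real.exp_pos (-μ_X * t)]
  have hρpos : ∀ t : ℝ, 0 < ρX t := fun t => lt_trans hqX (hρgt t)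
  have hexple : ∀ t : ℝ, 0 ≤ t → Real.exp (-μ_X * t) ≤ 1 := by
    intro t ht
    rw [Real.exp_le_one_iff]; nlinarith
  -- derivative lower bound
  have hρ'lb : ∀ t : ℝ, 0 ≤ t →
      -(μ_X * (p_X - q_X)) ≤ -(μ_X * (p_X - q_X) * Real.exp (-μ_X * t)) := by
    intro t ht
    have := hexple t ht
    have := Real.exp_pos (-μ_X * t)
    nlinarith
  by_contra hcon
  push_neg at hcon
  obtain ⟨t₀, ht₀, ht₀'⟩ := hcon
  set S : Set ℝ := {t | 0 ≤ t ∧ ρX t ≤ |Xref t - Xhat t|} with hSdef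
  have hne : S.Nonempty := ⟨t₀, ht₀, ht₀'⟩
  have hbdd : BddBelow S := ⟨0, fun x hx => hx.1⟩
  set T := sInf S with hTdef
  have hT0 : 0 ≤ T := le_csInf hne fun x hx => hx.1
  -- points before T are strictly inside the funnel
  have hnotin : ∀ s, 0 ≤ s → s < T → |Xref s - Xhat s| < ρX s := by
    intro s hs hsT
    by_contra h
    push_neg at h
    exact absurd (csInf_le hbdd ⟨hs, h⟩) (not_le.mpr hsT)
  -- continuity of w = |v| - ρX at points t ≥ 0
  have hw : ∀ t : ℝ, 0 ≤ t →
      ContinuousAt (fun s => |Xref s - Xhat s| - ρX s) t := by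
    intro t ht
    exact (((hXref' t ht).continuousAt.sub (hXhat t ht).continuousAt).abs).sub
      (hρderiv t).continuousAt
  -- T belongs to S
  have hTS : ρX T ≤ |Xref T - Xhat T| := by
    by_contra h
    push_neg at h
    have hwT : (fun s => |Xref s - Xhat s| - ρX s) T < 0 := by simpa using sub_neg.mpr h
    have hev : ∀ᶠ s in 𝓝 T, |Xref s - Xhat s| - ρX s < 0 :=
      (hw T hT0).eventually_lt_const hwT
    obtain ⟨ε, hε, hball⟩ := Metric.eventually_nhds_iff.mp hev
    obtain ⟨s, hsS, hslt⟩ := exists_lt_of_csInf_lt hne (show sInf S < T + ε by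
      rw [← hTdef]; linarith)
    have hTs : T ≤ s := csInf_le hbdd hsS
    have : dist s T < ε := by
      rw [Real.dist_eq, abs_of_nonneg (by linarith)]; linarith
    have := hball this
    have := hsS.2
    linarith
  have habs : |Xref T - Xhat T| = ρX T := by
    rcases lt_or_eq_of_le hTS with hlt | heq
    ·
      -- handle below; here show T > 0 case via limit
      exfalso
      have hT0' : 0 < T := by
        rcases eq_or_lt_of_le hT0 with h0 | h0
        · -- T = 0: initial condition contradiction
          have hρ0 := hρpos 0
          have he0 : eX 0 = (Xref 0 - Xhat 0) / ρX 0 := heX 0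
          have : |Xref 0 - Xhat 0| < ρX 0 := by
            have := hinitX
            rw [he0, abs_div, abs_of_pos hρ0, div_lt_one hρ0] at this
            exact this
          rw [← h0] at hTS
          linarith
        · exact h0
      have htend : Filter.Tendsto (fun s => |Xref s - Xhat s| - ρX s) (𝓝[<] T)
          (𝓝 (|Xref T - Xhat T| - ρX T)) := (hw T hT0).continuousWithinAt
      have hevle : ∀ᶠ s in 𝓝[<] T, |Xref s - Xhat s| - ρX s ≤ 0 := by
        filter_upwards [Ioo_mem_nhdsLT_of_mem (⟨hT0', le_refl T⟩ : T ∈ Set.Ioc 0 T)]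
          with s hs
        exact (sub_neg.mpr (hnotin s hs.1.le hs.2)).le
      have := le_of_tendsto htend hevle
      linarith
    · exact heq.symm
  have hT0' : 0 < T := by
    rcases eq_or_lt_of_le hT0 with h0 | h0
    · exfalso
      have hρ0 := hρpos 0
      have : |Xref 0 - Xhat 0| < ρX 0 := by
        have := hinitX
        rw [heX 0, abs_div, abs_of_pos hρ0, div_lt_one hρ0] at this
        exact this
      rw [← h0] at hTS
      linarith
    · exact h0
  -- common facts at T
  have hρT := hρpos T
  have hρTgt := hρgt T
  have hρTne : ρX T ≠ 0 := ne_of_gt hρT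
  have hXrefT := hXrefrange T hT0
  have hXrefd' := hXrefbnd T hT0
  have hXe := hXerr T hT0
  have hIe := hIerr T hT0
  have hXe' := hXerr' T hT0
  have hSI := hStageI T hT0
  have hρ'T := hρ'lb T hT0
  have hXref'bd := abs_le.mp hXrefd'
  have hXebd := abs_le.mp hXe
  have hIebd := abs_le.mp hIe
  have hXe'bd := abs_le.mp hXe'
  rcases (abs_eq hρT.le).mp habs with hcase | hcase
  · -- v T = ρX T : upper boundary
    have heXT : eX T = 1 := by rw [heX T, hcase, div_self hρTne]
    have hΨT : Ψ (eX T) = 1 := hΨ1 _ (le_of_eq heXT.symm)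
    have hIrefT : Iref T = κ₂ := by rw [hIrefdef T, hΨT, mul_one]
    have hIhatlb : κ₂ - p_I < Ihat T := by
      have h := hSI.1
      rw [hIrefT] at h
      have := (abs_lt.mp h).2
      linarith [hSI.2]
    have hIlb : κ₂ - p_I - Δ_I < I T := by linarith [hIebd.2]
    have hXub : X T ≤ κ₁ - q_X + Δ_X := by
      have hXhatT : Xhat T = Xref T - ρX T := by linarith
      have := hXebd.2
      linarith [hρTgt, hXrefT.2]
    have hP2barpos : (0:ℝ) ≤ P2bar := by linarith [hP2.1, hP2.2]
    have hP2X : P2 * X T ≤ P2bar * (κ₁ - q_X + Δ_X) := by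
      rcases le_or_gt 0 (X T) with hx | hx
      · calc P2 * X T ≤ P2bar * X T := mul_le_mul_of_nonneg_right hP2.2 hx
          _ ≤ P2bar * (κ₁ - q_X + Δ_X) := mul_le_mul_of_nonneg_left hXub hP2barpos
      · have ha : P2 * X T < 0 :=
          mul_neg_of_pos_of_neg (lt_of_lt_of_le hP2low hP2.1) hx
        have hb : (0:ℝ) ≤ P2bar * (κ₁ - q_X + Δ_X) := mul_nonneg hP2barpos h2
        linarith
    have hP3I : P3low * (κ₂ - p_I - Δ_I) < P3 * I T := by
      have hIpos : 0 ≤ I T := by linarith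
      have ha : P3low * (κ₂ - p_I - Δ_I) < P3low * I T :=
        mul_lt_mul_of_pos_left hIlb hP3low
      have hb : P3low * I T ≤ P3 * I T := mul_le_mul_of_nonneg_right hP3.1 hIpos
      linarith
    have hXhat'lb : -(P2bar * (κ₁ - q_X + Δ_X)) + P3low * (κ₂ - p_I - Δ_I) - Δ'_X
        < Xhat' T := by
      have := hXe'bd.2
      linarith
    have hg : HasDerivAt (fun s => Xref s - Xhat s - ρX s)
        (Xref' T - Xhat' T - -(μ_X * (p_X - q_X) * Real.exp (-μ_X * T))) T :=
      ((hXref' T hT0).sub (hXhat T hT0)).sub (hρderiv T)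
    refine absurd (exit_contra hg ?_ (by simpa using sub_eq_zero.mpr hcase) hT0'
      fun s hs hsT => ?_) (not_false)
    · have := hXref'bd.2
      linarith [hρ'T, hXhat'lb, hFC2a, hP2X, hP3I]
    · have := hnotin s hs hsT
      have := (abs_lt.mp this).2
      linarith
  · -- v T = -ρX T : lower boundary
    have heXT : eX T = -1 := by
      rw [heX T, hcase, neg_div, div_self hρTne]
    have hΨT : Ψ (eX T) = 0 := hΨ0 _ (by rw [heXT]; norm_num)
    have hIrefT : Iref T = 0 := by rw [hIrefdef T, hΨT, mul_zero]
    have hIhatub : Ihat T < p_I := by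
      have h := hSI.1
      rw [hIrefT] at h
      have := (abs_lt.mp h).1
      linarith [hSI.2]
    have hIub : I T < p_I + Δ_I := by linarith [hIebd.2]
    have hXlb : q_X - Δ_X ≤ X T := by
      have hXhatT : Xhat T = Xref T + ρX T := by linarith
      have := hXebd.1
      linarith [hρTgt, hXrefT.1]
    have hP2X : P2low * (q_X - Δ_X) ≤ P2 * X T := by
      have hXpos : 0 ≤ X T := le_trans h3 hXlb
      have ha : P2low * (q_X - Δ_X) ≤ P2low * X T :=
        mul_le_mul_of_nonneg_left hXlb hP2low.le
      have hb : P2low * X T ≤ P2 * X T := mul_le_mul_of_nonneg_right hP2.1 hXpos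
      linarith
    have hpIpos : 0 < p_I + Δ_I := by linarith
    have hP3barpos : (0:ℝ) ≤ P3bar := by linarith [hP3.1, hP3.2]
    have hP3I : P3 * I T ≤ P3bar * (p_I + Δ_I) := by
      rcases le_or_gt 0 (I T) with hx | hx
      · calc P3 * I T ≤ P3bar * I T := mul_le_mul_of_nonneg_right hP3.2 hx
          _ ≤ P3bar * (p_I + Δ_I) := mul_le_mul_of_nonneg_left hIub.le hP3barpos
      · have ha : P3 * I T < 0 :=
          mul_neg_of_pos_of_neg (lt_of_lt_of_le hP3low hP3.1) hx
        have hb : (0:ℝ) ≤ P3bar * (p_I + Δ_I) := mul_nonneg hP3barpos hpIpos.le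
        linarith
    have hXhat'ub : Xhat' T ≤ -(P2low * (q_X - Δ_X)) + P3bar * (p_I + Δ_I) + Δ'_X := by
      have := hXe'bd.1
      linarith
    have hg : HasDerivAt (fun s => Xhat s - Xref s - ρX s)
        (Xhat' T - Xref' T - -(μ_X * (p_X - q_X) * Real.exp (-μ_X * T))) T :=
      ((hXhat T hT0).sub (hXref' T hT0)).sub (hρderiv T)
    refine absurd (exit_contra hg ?_ (show Xhat T - Xref T - ρX T = 0 by linarith) hT0'
      fun s hs hsT => ?_) (not_false)
    · have := hXref'bd.1
      linarith [hρ'T, hXhat'ub, hFC2b, hP2X, hP3I]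
    · have := hnotin s hs hsT
      have := (abs_lt.mp this).1
      show Xhat s - Xref s - ρX s < 0
      linarith
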